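/- In U_q(sl2), for the shifted extremal projector π(s) = \sum_{k=0}^{∞} f^k e^k π^k(s) with π^k(s) = (-1)^k q^{k(s-h-1)} / ([k]_q! \prod_{i=1}^{k}[s+i]_q), the intertwining relation e·π(s) = π(s+1) · (q^{-h}[s+1-h]_q/[s+1]_q) · e holds as an identity of operators on every highest weight module for which all coefficients are defined. -/

import Mathlib

open Finset

noncomputable section

/-- `(u - u⁻¹)/(q - q⁻¹)`; with `u = q^z` this is the q-number `[z]_q`. -/
def qNum (q u : ℂ) : ℂ := (u - u⁻¹) / (q - q⁻¹)

/-- q-factorial `[k]_q!`. -/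
def qFact (q : ℂ) (k : ℕ) : ℂ := ∏ i ∈ Finset.range k, qNum q (q ^ (i + 1))

/-! ### Auxiliary lemmas -/

lemma qNum_flat (q x : ℂ) (hq0 : q ≠ 0) (hx : x ≠ 0) (hq2 : q ^ 2 - 1 ≠ 0) :
    qNum q x = q * (x ^ 2 - 1) / (x * (q ^ 2 - 1)) := by
  have hqq : q - q⁻¹ ≠ 0 := by
    rw [show q - q⁻¹ = (q ^ 2 - 1) / q by field_simp]
    exact div_ne_zero hq2 hq0
  rw [qNum, div_eq_div_iff hqq (mul_ne_zero hx hq2)]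
  field_simp

/-- The coefficient in the commutation `E F^{k+1} = F^{k+1} E + Cc • F^k`
on a `K`-eigenvector of eigenvalue `μ`. -/
def Cc (q μ : ℂ) (k : ℕ) : ℂ :=
  q * (q ^ 2 * ((q ^ 2) ^ (k + 1) - 1) * μ ^ 2 - ((q ^ 2) ^ (k + 1) - 1) * (q ^ 2) ^ (k + 1)) /
    ((q ^ 2) ^ (k + 1) * (q ^ 2 - 1) ^ 2 * μ)

lemma Cc_zero (q μ : ℂ) (hq0 : q ≠ 0) (hq2 : q ^ 2 - 1 ≠ 0) (hμ : μ ≠ 0) :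
    Cc q μ 0 = (q - q⁻¹)⁻¹ * (μ - μ⁻¹) := by
  have hQ : (q - q⁻¹)⁻¹ = q / (q ^ 2 - 1) := by
    rw [show q - q⁻¹ = (q ^ 2 - 1) / q by field_simp, inv_div]
  have hsub : μ - μ⁻¹ = (μ ^ 2 - 1) / μ := by field_simp
  have hq2' : (q : ℂ) ^ 2 ≠ 0 := pow_ne_zero 2 hq0
  rw [Cc, hQ, hsub, div_mul_div_comm, zero_add, pow_one]
  rw [div_eq_div_iff (mul_ne_zero (mul_ne_zero hq2' (pow_ne_zero _ hq2)) hμ)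
    (mul_ne_zero hq2 hμ)]
  ring

lemma Cc_succ (q μ : ℂ) (hq0 : q ≠ 0) (hq2 : q ^ 2 - 1 ≠ 0) (hμ : μ ≠ 0) (n : ℕ) :
    Cc q μ (n + 1) = (q - q⁻¹)⁻¹ * (μ - μ⁻¹) + Cc q ((q ^ 2)⁻¹ * μ) n := by
  have hQ : (q - q⁻¹)⁻¹ = q / (q ^ 2 - 1) := by
    rw [show q - q⁻¹ = (q ^ 2 - 1) / q by field_simp, inv_div]
  have hm : ((q : ℂ) ^ 2) ^ (n + 1) ≠ 0 := pow_ne_zero _ (pow_ne_zero 2 hq0)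
  have hq2' : (q : ℂ) ^ 2 ≠ 0 := pow_ne_zero 2 hq0
  have hCc2 : Cc q ((q ^ 2)⁻¹ * μ) n =
      q * ((q ^ 2) ^ (n + 1) - 1) * (μ ^ 2 - (q ^ 2) ^ (n + 1) * q ^ 2) /
        ((q ^ 2) ^ (n + 1) * (q ^ 2 - 1) ^ 2 * μ) := by
    rw [Cc, div_eq_div_iff
      (mul_ne_zero (mul_ne_zero hm (pow_ne_zero _ hq2)) (mul_ne_zero (inv_ne_zero hq2') hμ))
      (mul_ne_zero (mul_ne_zero hm (pow_ne_zero _ hq2)) hμ)]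
    field_simp
  have hsub : μ - μ⁻¹ = (μ ^ 2 - 1) / μ := by field_simp
  rw [Cc, hQ, hCc2, hsub, div_mul_div_comm]
  rw [show ((q : ℂ) ^ 2) ^ (n + 1 + 1) = ((q : ℂ) ^ 2) ^ (n + 1) * q ^ 2 from pow_succ _ _]
  generalize hgen : ((q : ℂ) ^ 2) ^ (n + 1) = m at hm ⊢
  have d1 : (q ^ 2 - 1) * μ ≠ 0 := mul_ne_zero hq2 hμ
  have d2 : m * (q ^ 2 - 1) ^ 2 * μ ≠ 0 := mul_ne_zero (mul_ne_zero hm (pow_ne_zero _ hq2)) hμ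
  have d3 : m * q ^ 2 * (q ^ 2 - 1) ^ 2 * μ ≠ 0 :=
    mul_ne_zero (mul_ne_zero (mul_ne_zero hm hq2') (pow_ne_zero _ hq2)) hμ
  rw [div_add_div _ _ d1 d2, div_eq_div_iff d3 (mul_ne_zero d1 d2)]
  ring

lemma e_pow_comm {V : Type*} [AddCommGroup V] [Module ℂ V]
    (q : ℂ) (hq0 : q ≠ 0) (hq2 : q ^ 2 - 1 ≠ 0)
    (E F K Ki : Module.End ℂ V) (hKi : Ki * K = 1)
    (hKF : K * F = (q ^ 2)⁻¹ • (F * K))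
    (hEF : E * F - F * E = (q - q⁻¹)⁻¹ • (K - Ki)) :
    ∀ (k : ℕ) (w : V) (μ : ℂ), μ ≠ 0 → K w = μ • w →
      E ((F ^ (k + 1)) w) = (F ^ (k + 1)) (E w) + Cc q μ k • (F ^ k) w := by
  have base : ∀ (w : V) (μ : ℂ), μ ≠ 0 → K w = μ • w →
      E (F w) = F (E w) + ((q - q⁻¹)⁻¹ * (μ - μ⁻¹)) • w := by
    intro w μ hμ hw
    have h0 : Ki (K w) = w := congrArg (fun (T : Module.End ℂ V) => T w) hKi
    rw [hw, map_smul] at h0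
    have hKiw : Ki w = μ⁻¹ • w := ((inv_smul_eq_iff₀ hμ).mpr h0.symm).symm
    have h1 : E (F w) - F (E w) = (q - q⁻¹)⁻¹ • (K w - Ki w) :=
      congrArg (fun (T : Module.End ℂ V) => T w) hEF
    rw [hw, hKiw] at h1
    have h2 : E (F w) = F (E w) + (q - q⁻¹)⁻¹ • (μ • w - μ⁻¹ • w) := by
      rw [← h1]; abel
    rw [h2, smul_sub, smul_smul, smul_smul, mul_sub, sub_smul]
  intro k
  induction k with
  | zero =>
    intro w μ hμ hw
    have hb := base w μ hμ hw
    rw [Cc_zero q μ hq0 hq2 hμ]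
    simpa [pow_one] using hb
  | succ n ih =>
    intro w μ hμ hw
    have hKFw : K (F w) = ((q ^ 2)⁻¹ * μ) • F w := by
      have h : K (F w) = (q ^ 2)⁻¹ • F (K w) :=
        congrArg (fun (T : Module.End ℂ V) => T w) hKF
      rw [h, hw, map_smul, smul_smul]
    have hμ' : (q ^ 2)⁻¹ * μ ≠ 0 := mul_ne_zero (inv_ne_zero (pow_ne_zero 2 hq0)) hμ
    have h2 := ih (F w) ((q ^ 2)⁻¹ * μ) hμ' hKFw
    have hb := base w μ hμ hw
    have hFF : (F ^ (n + 1 + 1)) w = (F ^ (n + 1)) (F w) := by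
      rw [pow_succ]; rfl
    have hFE : (F ^ (n + 1)) (F (E w)) = (F ^ (n + 1 + 1)) (E w) := by
      rw [pow_succ]; rfl
    have hFn : (F ^ n) (F w) = (F ^ (n + 1)) w := by
      rw [pow_succ]; rfl
    rw [hFF, h2, hb, map_add, map_smul, hFE, hFn, add_assoc, ← add_smul,
      ← Cc_succ q μ hq0 hq2 hμ n]

/-- Abstract sum manipulation. -/
lemma main_sum {V : Type*} [AddCommGroup V] [Module ℂ V] (N : ℕ)
    (c d : ℕ → ℂ) (σ : ℂ) (g : ℕ → ℂ) (A B : ℕ → V)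
    (hA0 : A 0 = B 0)
    (hAk : ∀ j, A (j + 1) = B (j + 1) + g j • B j)
    (hBN : B N = 0)
    (hcoeff : ∀ k, k < N → c k + c (k + 1) * g k = d k * σ) :
    ∑ k ∈ range (N + 1), c k • A k = ∑ k ∈ range (N + 1), (d k * σ) • B k := by
  rw [Finset.sum_range_succ' (fun k => c k • A k) N]
  have h1 : ∀ j ∈ range N,
      c (j + 1) • A (j + 1) = c (j + 1) • B (j + 1) + (c (j + 1) * g j) • B j := by
    intro j _; rw [hAk j, smul_add, smul_smul]
  rw [Finset.sum_congr rfl h1, Finset.sum_add_distrib, hA0, add_right_comm]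
  rw [show (∑ j ∈ range N, c (j + 1) • B (j + 1)) + c 0 • B 0
      = ∑ k ∈ range (N + 1), c k • B k from
    (Finset.sum_range_succ' (fun k => c k • B k) N).symm]
  rw [show (∑ j ∈ range N, (c (j + 1) * g j) • B j)
      = ∑ j ∈ range (N + 1), (c (j + 1) * g j) • B j by
    rw [Finset.sum_range_succ, hBN, smul_zero, add_zero]]
  rw [← Finset.sum_add_distrib]
  refine Finset.sum_congr rfl fun k hk => ?_
  rw [← add_smul]
  rcases Nat.lt_succ_iff_lt_or_eq.mp (Finset.mem_range.mp hk) with h | h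
  · rw [hcoeff k h]
  · subst h; rw [hBN, smul_zero, smul_zero]

set_option maxHeartbeats 1000000 in
theorem e_intertwining_relation {V : Type*} [AddCommGroup V] [Module ℂ V]
    (q t κ : ℂ) (hq0 : q ≠ 0) (hq : ∀ n : ℕ, 0 < n → q ^ n ≠ 1) (ht : t ≠ 0) (hκ : κ ≠ 0)
    (E F K Ki : Module.End ℂ V)
    (hK : K * Ki = 1) (hKi : Ki * K = 1)
    (hKE : K * E = (q ^ 2) • (E * K)) (hKF : K * F = (q ^ 2)⁻¹ • (F * K))
    (hEF : E * F - F * E = (q - q⁻¹)⁻¹ • (K - Ki))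
    (v : V) (hKv : K v = κ • v) (N : ℕ) (hnil : (E ^ (N + 1)) v = 0)
    (hden : ∀ i : ℕ, 1 ≤ i → i ≤ N + 1 → qNum q (t * q ^ (i : ℤ)) ≠ 0) :
    E (∑ k ∈ range (N + 1),
        ((-1 : ℂ) ^ k * (t * (q * κ)⁻¹) ^ k /
            (qFact q k * ∏ i ∈ range k, qNum q (t * q ^ ((i : ℤ) + 1)))) •
          (F ^ k) ((E ^ k) v))
      = ∑ k ∈ range (N + 1),
          ((-1 : ℂ) ^ k * (t * q * (q * (κ * q ^ 2))⁻¹) ^ k /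
              (qFact q k * ∏ i ∈ range k, qNum q (t * q * q ^ ((i : ℤ) + 1)))) •
            (F ^ k) ((E ^ k)
              (((κ * q ^ 2)⁻¹ * qNum q (t * q * (κ * q ^ 2)⁻¹) / qNum q (t * q)) • E v)) := by
  have hq2 : q ^ 2 - 1 ≠ 0 := sub_ne_zero.mpr (hq 2 two_pos)
  have hqNe : ∀ m : ℕ, 0 < m → qNum q (q ^ m) ≠ 0 := by
    intro m hm
    rw [qNum_flat q _ hq0 (pow_ne_zero m hq0) hq2]
    apply div_ne_zero
    · apply mul_ne_zero hq0
      rw [← pow_mul]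
      exact sub_ne_zero.mpr (hq (m * 2) (by positivity))
    · exact mul_ne_zero (pow_ne_zero m hq0) hq2
  have hFactNe : ∀ k, qFact q k ≠ 0 := by
    intro k
    induction k with
    | zero => simp [qFact]
    | succ n ih =>
      rw [qFact, Finset.prod_range_succ, ← qFact]
      exact mul_ne_zero ih (hqNe (n + 1) (Nat.succ_pos n))
  -- eigenvalues of K on E^k v
  have eig : ∀ k : ℕ, K ((E ^ k) v) = (κ * (q ^ 2) ^ k) • (E ^ k) v := by
    intro k
    induction k with
    | zero => simpa using hKv
    | succ n ih =>
      have h1 : (E ^ (n + 1)) v = E ((E ^ n) v) := by rw [pow_succ']; rfl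
      have h2 : K (E ((E ^ n) v)) = (q ^ 2) • E (K ((E ^ n) v)) :=
        congrArg (fun (T : Module.End ℂ V) => T ((E ^ n) v)) hKE
      rw [h1, h2, ih, map_smul, smul_smul]
      congr 1
      rw [pow_succ]; ring
  -- rewrite both sides into `main_sum` shape
  rw [map_sum]
  simp only [map_smul, smul_smul]
  have hEpow : ∀ k : ℕ, (E ^ k) (E v) = (E ^ (k + 1)) v := by
    intro k; rw [pow_succ]; rfl
  simp only [hEpow]
  refine main_sum N _ _ _ (fun k => Cc q (κ * (q ^ 2) ^ (k + 1)) k)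
    (fun k => E ((F ^ k) ((E ^ k) v))) (fun k => (F ^ k) ((E ^ (k + 1)) v))
    ?_ ?_ ?_ ?_
  · show E ((F ^ 0) ((E ^ 0) v)) = (F ^ 0) ((E ^ (0 + 1)) v)
    simp [Module.End.one_apply]
  · intro j
    have hμ : κ * (q ^ 2) ^ (j + 1) ≠ 0 :=
      mul_ne_zero hκ (pow_ne_zero _ (pow_ne_zero 2 hq0))
    have h := e_pow_comm q hq0 hq2 E F K Ki hKi hKF hEF j ((E ^ (j + 1)) v)
      (κ * (q ^ 2) ^ (j + 1)) hμ (eig (j + 1))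
    have hE2 : (E ^ (j + 1 + 1)) v = E ((E ^ (j + 1)) v) := by rw [pow_succ']; rfl
    rw [hE2]
    exact h
  · show (F ^ N) ((E ^ (N + 1)) v) = 0
    rw [hnil, map_zero]
  · intro k hkN
    have hu0 : (q : ℂ) ^ (k + 1) ≠ 0 := pow_ne_zero _ hq0
    have hzp : ∀ i : ℕ, (q : ℂ) ^ ((i : ℤ) + 1) = q ^ (i + 1) := by
      intro i
      rw [show ((i : ℤ) + 1) = ((i + 1 : ℕ) : ℤ) by push_cast; ring, zpow_natCast]
    have hX : qFact q k ≠ 0 := hFactNe k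
    have hY : (∏ i ∈ range k, qNum q (t * q ^ ((i : ℤ) + 1))) ≠ 0 := by
      apply Finset.prod_ne_zero_iff.mpr
      intro i hi
      rw [hzp i]
      have h := hden (i + 1) (by omega)
        (by have := Finset.mem_range.mp hi; omega)
      rwa [zpow_natCast] at h
    have hQu : qNum q (q ^ (k + 1)) ≠ 0 := hqNe (k + 1) (Nat.succ_pos k)
    have hQtu : qNum q (t * q ^ (k + 1)) ≠ 0 := by
      have h := hden (k + 1) (by omega) (by omega)
      rwa [zpow_natCast] at h
    have hQtq : qNum q (t * q) ≠ 0 := by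
      have h := hden 1 le_rfl (by omega)
      rwa [show ((1 : ℕ) : ℤ) = (1 : ℤ) by norm_num, zpow_one] at h
    have hκq2 : κ * q ^ 2 ≠ 0 := mul_ne_zero hκ (pow_ne_zero 2 hq0)
    have hσarg : t * q * (κ * q ^ 2)⁻¹ ≠ 0 :=
      mul_ne_zero (mul_ne_zero ht hq0) (inv_ne_zero hκq2)
    -- nonzero binomials
    have hu2 : ((q : ℂ) ^ (k + 1)) ^ 2 - 1 ≠ 0 := by
      rw [← pow_mul]
      exact sub_ne_zero.mpr (hq ((k + 1) * 2) (by positivity))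
    have htu2 : (t * (q : ℂ) ^ (k + 1)) ^ 2 - 1 ≠ 0 := by
      intro h
      apply hQtu
      rw [qNum_flat q (t * q ^ (k + 1)) hq0 (mul_ne_zero ht hu0) hq2, h, mul_zero, zero_div]
    have htq2 : (t * q) ^ 2 - 1 ≠ 0 := by
      intro h
      apply hQtq
      rw [qNum_flat q (t * q) hq0 (mul_ne_zero ht hq0) hq2, h, mul_zero, zero_div]
    -- structural rewrites
    have hqf : qFact q (k + 1) = qFact q k * qNum q (q ^ (k + 1)) := by
      rw [qFact, Finset.prod_range_succ, ← qFact]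
    have hP1 : (∏ i ∈ range (k + 1), qNum q (t * q ^ ((i : ℤ) + 1)))
        = (∏ i ∈ range k, qNum q (t * q ^ ((i : ℤ) + 1))) * qNum q (t * q ^ (k + 1)) := by
      rw [Finset.prod_range_succ, hzp k]
    have hP2 : (∏ i ∈ range k, qNum q (t * q * q ^ ((i : ℤ) + 1)))
        = (∏ i ∈ range k, qNum q (t * q ^ ((i : ℤ) + 1))) * qNum q (t * q ^ (k + 1))
            / qNum q (t * q) := by
      rw [eq_div_iff hQtq]
      have hQarg : ∀ i : ℕ, qNum q (t * q * q ^ ((i : ℤ) + 1))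
          = qNum q (t * q ^ (((i + 1 : ℕ) : ℤ) + 1)) := by
        intro i
        congr 1
        push_cast
        rw [zpow_add_one₀ hq0 ((i : ℤ) + 1)]
        ring
      rw [Finset.prod_congr rfl (fun i _ => hQarg i), ← hP1, Finset.prod_range_succ']
      congr 1
      norm_num
    have harg : t * q * (q * (κ * q ^ 2))⁻¹ = t * (q * κ)⁻¹ * q⁻¹ := by
      field_simp
    have hqk : ((q : ℂ)⁻¹) ^ k = q * (q ^ (k + 1))⁻¹ := by
      rw [inv_pow, pow_succ, mul_inv_rev, ← mul_assoc, mul_inv_cancel₀ hq0, one_mul]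
    rw [hqf, hP1, hP2, harg, mul_pow (t * (q * κ)⁻¹) q⁻¹ k, hqk, pow_succ (-1 : ℂ) k, pow_succ (t * (q * κ)⁻¹) k,
      Cc, show ((q : ℂ) ^ 2) ^ (k + 1) = (q ^ (k + 1)) ^ 2 by
        rw [← pow_mul, ← pow_mul, Nat.mul_comm]]
    rw [qNum_flat q (q ^ (k + 1)) hq0 hu0 hq2,
      qNum_flat q (t * q ^ (k + 1)) hq0 (mul_ne_zero ht hu0) hq2,
      qNum_flat q (t * q) hq0 (mul_ne_zero ht hq0) hq2,
      qNum_flat q (t * q * (κ * q ^ 2)⁻¹) hq0 hσarg hq2]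
    rw [show t * q * (κ * q ^ 2)⁻¹ = t / (κ * q) by field_simp]
    rw [show (t / (κ * q)) ^ 2 - 1 = (t ^ 2 - κ ^ 2 * q ^ 2) / (κ ^ 2 * q ^ 2) by
      field_simp]
    generalize hu : (q : ℂ) ^ (k + 1) = u at hu0 hu2 htu2 ⊢
    generalize hp : ((-1 : ℂ)) ^ k = p
    generalize hSS : (t * (q * κ)⁻¹) ^ k = S
    generalize hXX : qFact q k = X at hX ⊢
    generalize hYY : (∏ i ∈ range k, qNum q (t * q ^ ((i : ℤ) + 1))) = Y at hY ⊢
    have hκu2 : κ * u ^ 2 ≠ 0 := mul_ne_zero hκ (pow_ne_zero 2 hu0)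
    have eA : q * (q ^ 2 * (u ^ 2 - 1) * (κ * u ^ 2) ^ 2 - (u ^ 2 - 1) * u ^ 2) /
          (u ^ 2 * (q ^ 2 - 1) ^ 2 * (κ * u ^ 2))
        = q * (u ^ 2 - 1) * (κ ^ 2 * q ^ 2 * u ^ 2 - 1) / ((q ^ 2 - 1) ^ 2 * (κ * u ^ 2)) := by
      rw [div_eq_div_iff
        (mul_ne_zero (mul_ne_zero (pow_ne_zero 2 hu0) (pow_ne_zero 2 hq2)) hκu2)
        (mul_ne_zero (pow_ne_zero 2 hq2) hκu2)]
      ring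
    have eB : p * -1 * (S * (t * (q * κ)⁻¹)) /
          (X * (q * (u ^ 2 - 1) / (u * (q ^ 2 - 1))) *
            (Y * (q * ((t * u) ^ 2 - 1) / (t * u * (q ^ 2 - 1)))))
        = -(p * S * t ^ 2 * u ^ 2 * (q ^ 2 - 1) ^ 2) /
            (κ * q ^ 3 * (X * Y * (u ^ 2 - 1) * ((t * u) ^ 2 - 1))) := by
      field_simp
    have eσ : q * ((t ^ 2 - κ ^ 2 * q ^ 2) / (κ ^ 2 * q ^ 2)) / (t / (κ * q) * (q ^ 2 - 1))
        = q * (t ^ 2 - κ ^ 2 * q ^ 2) / (κ * q * t * (q ^ 2 - 1)) := by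
      field_simp
    have hXY : X * Y ≠ 0 := mul_ne_zero hX hY
    have htu2' : t ^ 2 * u ^ 2 - 1 ≠ 0 := by rwa [← mul_pow]
    have eσ2 : (κ * q ^ 2)⁻¹ * (q * (t ^ 2 - κ ^ 2 * q ^ 2) / (κ * q * t * (q ^ 2 - 1))) /
          (q * ((t * q) ^ 2 - 1) / (t * q * (q ^ 2 - 1)))
        = (t ^ 2 - κ ^ 2 * q ^ 2) / (κ ^ 2 * q ^ 2 * ((t * q) ^ 2 - 1)) := by
      simp only [mul_div_assoc', div_mul_div_comm, div_div_eq_mul_div, div_div,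
        div_mul_eq_mul_div, inv_mul_eq_div]
      rw [div_eq_div_iff
        (mul_ne_zero (mul_ne_zero (mul_ne_zero hκ (pow_ne_zero 2 hq0))
            (mul_ne_zero (mul_ne_zero (mul_ne_zero hκ hq0) ht) hq2))
          (mul_ne_zero hq0 htq2))
        (mul_ne_zero (mul_ne_zero (pow_ne_zero 2 hκ) (pow_ne_zero 2 hq0)) htq2)]
      ring
    have eD : ∀ s : ℂ, s * (q * u⁻¹) /
          (X * (Y * (q * ((t * u) ^ 2 - 1) / (t * u * (q ^ 2 - 1))) *
            (t * q * (q ^ 2 - 1) / (q * ((t * q) ^ 2 - 1)))))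
        = s * ((t * q) ^ 2 - 1) / (X * Y * ((t * u) ^ 2 - 1)) := by
      intro s
      simp only [← div_eq_mul_inv, mul_div_assoc', div_mul_div_comm, div_div_eq_mul_div,
        div_div, div_mul_eq_mul_div, inv_mul_eq_div]
      rw [div_eq_div_iff
        (mul_ne_zero hu0 (mul_ne_zero hX (mul_ne_zero
          (mul_ne_zero hY (mul_ne_zero hq0 htu2))
          (mul_ne_zero (mul_ne_zero ht hq0) hq2))))
        (mul_ne_zero hXY htu2)]
      ring
    have eE : ∀ s : ℂ, s * ((t * q) ^ 2 - 1) / (X * Y * ((t * u) ^ 2 - 1)) *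
          ((t ^ 2 - κ ^ 2 * q ^ 2) / (κ ^ 2 * q ^ 2 * ((t * q) ^ 2 - 1)))
        = s * (t ^ 2 - κ ^ 2 * q ^ 2) / (X * Y * (κ ^ 2 * q ^ 2) * (t ^ 2 * u ^ 2 - 1)) := by
      intro s
      rw [div_mul_div_comm, div_eq_div_iff
        (mul_ne_zero (mul_ne_zero hXY htu2)
          (mul_ne_zero (mul_ne_zero (pow_ne_zero 2 hκ) (pow_ne_zero 2 hq0)) htq2))
        (mul_ne_zero (mul_ne_zero hXY
          (mul_ne_zero (pow_ne_zero 2 hκ) (pow_ne_zero 2 hq0))) htu2')]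
      ring
    have efin : ∀ s : ℂ, s / (X * Y) +
        -(s * t ^ 2 * u ^ 2 * (q ^ 2 - 1) ^ 2) /
            (κ * q ^ 3 * (X * Y * (u ^ 2 - 1) * ((t * u) ^ 2 - 1))) *
          (q * (u ^ 2 - 1) * (κ ^ 2 * q ^ 2 * u ^ 2 - 1) / ((q ^ 2 - 1) ^ 2 * (κ * u ^ 2)))
        = s * (t ^ 2 - κ ^ 2 * q ^ 2) / (X * Y * (κ ^ 2 * q ^ 2) * (t ^ 2 * u ^ 2 - 1)) := by
      intro s
      have hD2 : κ * q ^ 3 * (X * Y * (u ^ 2 - 1) * ((t * u) ^ 2 - 1)) *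
          ((q ^ 2 - 1) ^ 2 * (κ * u ^ 2)) ≠ 0 := by
        apply mul_ne_zero
        · exact mul_ne_zero (mul_ne_zero hκ (pow_ne_zero 3 hq0))
            (mul_ne_zero (mul_ne_zero hXY hu2) htu2)
        · exact mul_ne_zero (pow_ne_zero 2 hq2) (mul_ne_zero hκ (pow_ne_zero 2 hu0))
      have hD3 : X * Y * (κ ^ 2 * q ^ 2) * (t ^ 2 * u ^ 2 - 1) ≠ 0 :=
        mul_ne_zero (mul_ne_zero hXY
          (mul_ne_zero (pow_ne_zero 2 hκ) (pow_ne_zero 2 hq0))) htu2'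
      rw [div_mul_div_comm, div_add_div _ _ hXY hD2,
        div_eq_div_iff (mul_ne_zero hXY hD2) hD3]
      ring
    rw [eB, eσ, eA]
    rw [show p * (S * (q * u⁻¹)) = p * S * (q * u⁻¹) by ring]
    rw [div_eq_mul_inv (Y * (q * ((t * u) ^ 2 - 1) / (t * u * (q ^ 2 - 1))))
      (q * ((t * q) ^ 2 - 1) / (t * q * (q ^ 2 - 1))), inv_div]
    rw [eσ2, eD (p * S), eE (p * S)]
    exact efin (p * S)
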